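/- Let c = (c_1,…,c_k) be a composition of size n = c_1+⋯+c_k with k ≥ 2, and let 1 ≤ m ≤ k−1. Then for every real q, g_{c^m}(q) = ((c_1+⋯+c_m)/n)·g_{c^R}(q) + ((c_{m+1}+⋯+c_k)/n)·q^{c_1}·g_{c^L}(q). -/

import Mathlib

open MeasureTheory

/-- Iterated integral defining the composition polynomial, peeling off the
outermost variable first (so the list argument is the reversed composition). -/
noncomputable def gAux : List ℕ → ℝ → ℝ → ℝ
  | [], _, _ => 1
  | a :: rest, q, u => ∫ t in q..u, t ^ (a - 1) * gAux rest q t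

/-- The composition polynomial
`g_c(q) = ∫_q^1 ∫_q^{t_k} ⋯ ∫_q^{t_2} t_1^{c_1-1} ⋯ t_k^{c_k-1} dt_1 ⋯ dt_k`. -/
noncomputable def gcomp (c : List ℕ) (q : ℝ) : ℝ := gAux c.reverse q 1

lemma gAux_nil (q u : ℝ) : gAux [] q u = 1 := rfl

lemma gAux_cons (a : ℕ) (L : List ℕ) (q u : ℝ) :
    gAux (a :: L) q u = ∫ t in q..u, t ^ (a - 1) * gAux L q t := rfl

lemma gAux_cons_fun (a : ℕ) (L : List ℕ) (q : ℝ) :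
    gAux (a :: L) q = fun u => ∫ t in q..u, t ^ (a - 1) * gAux L q t :=
  funext fun _ => rfl

lemma gAux_continuous (L : List ℕ) (q : ℝ) : Continuous (gAux L q) := by
  induction L with
  | nil =>
    have : gAux [] q = fun _ : ℝ => (1 : ℝ) := funext fun _ => rfl
    rw [this]; exact continuous_const
  | cons a L ih =>
    have hint : Continuous fun t : ℝ => t ^ (a - 1) * gAux L q t :=
      (continuous_pow _).mul ih
    rw [gAux_cons_fun]
    refine continuous_iff_continuousAt.2 fun u => ?_
    exact (intervalIntegral.integral_hasDerivAt_right
      (hint.intervalIntegrable q u)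
      (hint.stronglyMeasurable.stronglyMeasurableAtFilter)
      hint.continuousAt).continuousAt

lemma gAux_hasDerivAt (a : ℕ) (L : List ℕ) (q u : ℝ) :
    HasDerivAt (gAux (a :: L) q) (u ^ (a - 1) * gAux L q u) u := by
  have hint : Continuous fun t : ℝ => t ^ (a - 1) * gAux L q t :=
    (continuous_pow _).mul (gAux_continuous L q)
  rw [gAux_cons_fun]
  exact intervalIntegral.integral_hasDerivAt_right
    (hint.intervalIntegrable q u)
    (hint.stronglyMeasurable.stronglyMeasurableAtFilter)
    hint.continuousAt

lemma gAux_same (a : ℕ) (L : List ℕ) (q : ℝ) : gAux (a :: L) q q = 0 := by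
  rw [gAux_cons, intervalIntegral.integral_same]

/-- Lemma A: `n * g = x^{outer} * g^{drop outer} - q^{inner} * g^{drop inner}`
(for the reversed composition `L ++ [f]`, `f` is the innermost part). -/
lemma lemA (q : ℝ) (L : List ℕ) : ∀ (f : ℕ), 0 < f → (∀ y ∈ L, 0 < y) → ∀ x : ℝ,
    ((L.sum + f : ℕ) : ℝ) * gAux (L ++ [f]) q x
      = x ^ (L ++ [f]).headI * gAux (L ++ [f]).tail q x - q ^ f * gAux L q x := by
  induction L with
  | nil =>
    intro f hf _ x
    simp only [List.nil_append, List.headI, List.tail_cons, List.sum_nil, Nat.zero_add]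
    rw [gAux_cons, gAux_nil]
    simp only [gAux_nil, mul_one]
    rw [integral_pow]
    have hf1 : f - 1 + 1 = f := Nat.succ_pred_eq_of_pos hf
    rw [hf1]
    have : (f : ℝ) ≠ 0 := Nat.cast_ne_zero.2 hf.ne'
    field_simp
    rw [← Nat.cast_add_one, hf1]; ring
  | cons g L' ih =>
    intro f hf hpos x
    have hg : 0 < g := hpos g (List.mem_cons_self)
    have hpos' : ∀ y ∈ L', 0 < y := fun y hy => hpos y (List.mem_cons_of_mem _ hy)
    obtain ⟨h', T, hM⟩ : ∃ h' T, L' ++ [f] = h' :: T := by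
      cases L' with
      | nil => exact ⟨f, [], rfl⟩
      | cons p P => exact ⟨p, P ++ [f], rfl⟩
    have hh' : 0 < h' := by
      have hmem : h' ∈ L' ++ [f] := by rw [hM]; exact List.mem_cons_self
      rcases List.mem_append.1 hmem with h | h
      · exact hpos' _ h
      · simp only [List.mem_singleton] at h; omega
    have ihx : ∀ t : ℝ, t ^ h' * gAux T q t
        = ((L'.sum + f : ℕ) : ℝ) * gAux (L' ++ [f]) q t + q ^ f * gAux L' q t := by
      intro t
      have h1 := ih f hf hpos' t
      rw [hM] at h1
      simp only [List.headI, List.tail_cons] at h1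
      rw [← hM] at h1
      linarith
    have hcont1 : Continuous fun t : ℝ => t ^ (g - 1) * gAux (L' ++ [f]) q t :=
      (continuous_pow _).mul (gAux_continuous _ q)
    have hcont2 : Continuous fun t : ℝ => t ^ (g - 1) * gAux L' q t :=
      (continuous_pow _).mul (gAux_continuous _ q)
    have hder : ∀ t ∈ Set.uIcc q x,
        HasDerivAt (fun t => t ^ g * gAux (L' ++ [f]) q t)
          (((L'.sum + f + g : ℕ) : ℝ) * (t ^ (g - 1) * gAux (L' ++ [f]) q t)
            + q ^ f * (t ^ (g - 1) * gAux L' q t)) t := by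
      intro t _
      have h1 : HasDerivAt (fun s : ℝ => s ^ g) ((g : ℝ) * t ^ (g - 1)) t :=
        hasDerivAt_pow g t
      have h2 : HasDerivAt (gAux (L' ++ [f]) q) (t ^ (h' - 1) * gAux T q t) t := by
        rw [hM]; exact gAux_hasDerivAt h' T q t
      have h3 := h1.fun_mul h2
      refine h3.congr_deriv ?_
      have e1 : t ^ g * (t ^ (h' - 1) * gAux T q t)
          = t ^ (g - 1) * (t ^ h' * gAux T q t) := by
        rw [← mul_assoc, ← mul_assoc, ← pow_add, ← pow_add]
        congr 2
        omega
      rw [e1, ihx t]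
      push_cast
      ring
    have hintg : IntervalIntegrable
        (fun t => ((L'.sum + f + g : ℕ) : ℝ) * (t ^ (g - 1) * gAux (L' ++ [f]) q t)
          + q ^ f * (t ^ (g - 1) * gAux L' q t)) volume q x :=
      ((continuous_const.mul hcont1).add (continuous_const.mul hcont2)).intervalIntegrable q x
    have key := intervalIntegral.integral_eq_sub_of_hasDerivAt hder hintg
    rw [intervalIntegral.integral_add ((continuous_const.fun_mul hcont1).intervalIntegrable q x)
        ((continuous_const.fun_mul hcont2).intervalIntegrable q x),
      intervalIntegral.integral_const_mul, intervalIntegral.integral_const_mul] at key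
    have hzero : gAux (L' ++ [f]) q q = 0 := by rw [hM]; exact gAux_same _ _ _
    rw [hzero, mul_zero, sub_zero] at key
    rw [← gAux_cons g (L' ++ [f]) q x, ← gAux_cons g L' q x] at key
    simp only [List.cons_append, List.headI, List.tail_cons, List.sum_cons]
    push_cast at key ⊢
    linarith

lemma getLastD_reverse (l : List ℕ) (h : l ≠ []) (d : ℕ) :
    l.reverse.getLastD d = l.headI := by
  cases l with
  | nil => exact absurd rfl h
  | cons x t =>
    rw [List.reverse_cons, List.getLastD_eq_getLast?, List.getLast?_concat]; rfl

/-- Rearranged form of Lemma A. -/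
lemma corA (q : ℝ) (P : List ℕ) (hP : P ≠ []) (hpos : ∀ y ∈ P, 0 < y) (t : ℝ) :
    t ^ P.headI * gAux P.tail q t
      = (P.sum : ℝ) * gAux P q t + q ^ (P.getLastD 1) * gAux P.dropLast q t := by
  obtain ⟨L, f, rfl⟩ : ∃ L f, P = L ++ [f] := by
    rcases List.eq_nil_or_concat P with h | ⟨L, f, h⟩
    · exact absurd h hP
    · exact ⟨L, f, by simpa using h⟩
  have hf : 0 < f := hpos f (List.mem_append_right L (List.mem_singleton.2 rfl))
  have hposL : ∀ y ∈ L, 0 < y := fun y hy => hpos y (List.mem_append_left _ hy)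
  have h1 := lemA q L f hf hposL t
  have e1 : (L ++ [f]).getLastD 1 = f := by
    rw [List.getLastD_eq_getLast?, List.getLast?_concat]; rfl
  have e2 : (L ++ [f]).dropLast = L := List.dropLast_concat
  have e3 : ((L ++ [f]).sum : ℝ) = ((L.sum + f : ℕ) : ℝ) := by
    rw [List.sum_append]; simp
  rw [e1, e2, e3]
  linarith

/-- Lemma B: merging the two innermost-but-shifted parts. -/
lemma lemB (q : ℝ) (b : ℕ) (hb : 0 < b) (P : List ℕ) (hP : P ≠ [])
    (hposP : ∀ y ∈ P, 0 < y) :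
    ∀ (W : List ℕ), (∀ y ∈ W, 0 < y) → ∀ x : ℝ,
      gAux (W ++ (P.headI + b) :: P.tail) q x
        = (P.sum : ℝ) * gAux (W ++ b :: P) q x
          + q ^ (P.getLastD 1) * gAux (W ++ b :: P.dropLast) q x := by
  intro W
  induction W with
  | nil =>
    intro _ x
    have ha : 0 < P.headI := by
      cases P with
      | nil => exact absurd rfl hP
      | cons p P' => exact hposP p (List.mem_cons_self)
    simp only [List.nil_append]
    rw [gAux_cons, gAux_cons, gAux_cons]
    have hrw : ∀ t : ℝ, t ^ (P.headI + b - 1) * gAux P.tail q t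
        = (P.sum : ℝ) * (t ^ (b - 1) * gAux P q t)
          + q ^ (P.getLastD 1) * (t ^ (b - 1) * gAux P.dropLast q t) := by
      intro t
      have h1 := corA q P hP hposP t
      have hpow : t ^ (P.headI + b - 1) = t ^ (b - 1) * t ^ P.headI := by
        rw [← pow_add]; congr 1; omega
      rw [hpow, mul_assoc, h1]; ring
    simp only [hrw]
    rw [intervalIntegral.integral_add
        ((continuous_const.fun_mul ((continuous_pow _).fun_mul (gAux_continuous P q))).intervalIntegrable q x)
        ((continuous_const.fun_mul ((continuous_pow _).fun_mul (gAux_continuous P.dropLast q))).intervalIntegrable q x),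
      intervalIntegral.integral_const_mul, intervalIntegral.integral_const_mul]
  | cons g W' ih =>
    intro hposW x
    have hpos' : ∀ y ∈ W', 0 < y := fun y hy => hposW y (List.mem_cons_of_mem _ hy)
    simp only [List.cons_append]
    rw [gAux_cons, gAux_cons, gAux_cons]
    have hrw : ∀ t : ℝ, t ^ (g - 1) * gAux (W' ++ (P.headI + b) :: P.tail) q t
        = (P.sum : ℝ) * (t ^ (g - 1) * gAux (W' ++ b :: P) q t)
          + q ^ (P.getLastD 1) * (t ^ (g - 1) * gAux (W' ++ b :: P.dropLast) q t) := by
      intro t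
      rw [ih hpos' t]; ring
    simp only [hrw]
    rw [intervalIntegral.integral_add
        ((continuous_const.fun_mul ((continuous_pow _).fun_mul (gAux_continuous _ q))).intervalIntegrable q x)
        ((continuous_const.fun_mul ((continuous_pow _).fun_mul (gAux_continuous _ q))).intervalIntegrable q x),
      intervalIntegral.integral_const_mul, intervalIntegral.integral_const_mul]

/-- Theorem: for a composition `c = u ++ a :: b :: v` of size `n` (with `k ≥ 2`
parts, merging at position `m = |u| + 1`, so `c^m = u ++ (a+b) :: v`,
`β_m = u.sum + a`, and `n − β_m = b + v.sum`):
`g_{c^m}(q) = (β_m/n)·g_{c^R}(q) + ((n−β_m)/n)·q^{c_1}·g_{c^L}(q)`. -/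
theorem merged_composition_recursion (u : List ℕ) (a b : ℕ) (v : List ℕ)
    (hpos : ∀ x ∈ u ++ a :: b :: v, 0 < x) (q : ℝ) :
    gcomp (u ++ (a + b) :: v) q =
      (((u.sum + a : ℕ) : ℝ) / (((u ++ a :: b :: v).sum : ℕ) : ℝ)) *
          gcomp (u ++ a :: b :: v).dropLast q +
        (((b + v.sum : ℕ) : ℝ) / (((u ++ a :: b :: v).sum : ℕ) : ℝ)) *
          (q ^ (u ++ a :: b :: v).headI * gcomp (u ++ a :: b :: v).tail q) := by
  have ha : 0 < a := hpos a (by simp)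
  have hb : 0 < b := hpos b (by simp)
  have hposu : ∀ y ∈ u, 0 < y := fun y hy => hpos y (by simp [hy])
  have hposv : ∀ y ∈ v, 0 < y := fun y hy => hpos y (by simp [hy])
  set c : List ℕ := u ++ a :: b :: v with hc
  set P : List ℕ := a :: u.reverse with hPdef
  have hposP : ∀ y ∈ P, 0 < y := by
    intro y hy
    rcases List.mem_cons.1 hy with h | h
    · omega
    · exact hposu y (List.mem_reverse.1 h)
  have hB := lemB q b hb P (by simp [hPdef]) hposP v.reverse
    (fun y hy => hposv y (List.mem_reverse.1 hy)) 1
  -- identify the lists appearing in hB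
  have e1 : v.reverse ++ (P.headI + b) :: P.tail = (u ++ (a + b) :: v).reverse := by
    simp [hPdef, List.reverse_append]
  have e2 : v.reverse ++ b :: P = c.reverse := by
    simp [hPdef, hc, List.reverse_append]
  have e3 : v.reverse ++ b :: P.dropLast = c.tail.reverse := by
    cases u with
    | nil => simp [hPdef, hc, List.reverse_append]
    | cons g u' =>
      have h5 : (a :: (u'.reverse ++ [g])).dropLast = a :: u'.reverse := by
        rw [show a :: (u'.reverse ++ [g]) = (a :: u'.reverse) ++ [g] from rfl,
          List.dropLast_concat]
      simp [hPdef, hc, List.reverse_append, h5]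
  have e4 : P.getLastD 1 = c.headI := by
    cases u with
    | nil => simp [hPdef, hc]
    | cons g u' =>
      have h5 : (a :: (u'.reverse ++ [g])).getLast? = some g := by
        rw [show a :: (u'.reverse ++ [g]) = (a :: u'.reverse) ++ [g] from rfl,
          List.getLast?_concat]
      simp [hPdef, hc, List.getLastD_eq_getLast?, h5]
  rw [e1, e2, e3, e4] at hB
  -- Lemma A applied to c at x = 1
  have hcne : c.reverse ≠ [] := by simp [hc]
  have hA := corA q c.reverse hcne
    (by intro y hy; exact hpos y (by simpa using List.mem_reverse.1 hy)) 1
  rw [one_pow, one_mul] at hA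
  have f1 : c.reverse.tail = c.dropLast.reverse := List.tail_reverse (l := c)
  have f2 : c.reverse.dropLast = c.tail.reverse := by
    have h5 := List.tail_reverse (l := c.reverse)
    rw [List.reverse_reverse] at h5
    rw [h5, List.reverse_reverse]
  have f3 : c.reverse.getLastD 1 = c.headI := getLastD_reverse c (by simp [hc]) 1
  have f4 : (c.reverse.sum : ℝ) = (c.sum : ℝ) := by rw [List.sum_reverse]
  rw [f1, f2, f3, f4] at hA
  -- now hA : gcomp c.dropLast q = c.sum * gcomp c q + q^c.headI * gcomp c.tail q
  -- and hB : gcomp (u ++ (a+b)::v) q = P.sum * gcomp c q + q^c.headI * gcomp c.tail q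
  have hn : (0 : ℝ) < ((c.sum : ℕ) : ℝ) := by
    have : 0 < c.sum := by
      have : a ∈ c := by simp [hc]
      calc 0 < a := ha
        _ ≤ c.sum := List.single_le_sum (fun y hy => Nat.zero_le y) a this
    exact_mod_cast this
  have hsum : (c.sum : ℝ) = ((u.sum + a : ℕ) : ℝ) + ((b + v.sum : ℕ) : ℝ) := by
    simp [hc]; ring
  have hPsum : (P.sum : ℝ) = ((u.sum + a : ℕ) : ℝ) := by
    have : P.sum = u.sum + a := by
      simp [hPdef, List.sum_reverse]; omega
    rw [this]
  show gcomp (u ++ (a + b) :: v) q =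
      (((u.sum + a : ℕ) : ℝ) / ((c.sum : ℕ) : ℝ)) * gcomp c.dropLast q +
        (((b + v.sum : ℕ) : ℝ) / ((c.sum : ℕ) : ℝ)) * (q ^ c.headI * gcomp c.tail q)
  have hn' : ((c.sum : ℕ) : ℝ) ≠ 0 := ne_of_gt hn
  unfold gcomp
  set A : ℝ := gAux c.reverse q 1
  set B : ℝ := gAux c.tail.reverse q 1
  set R : ℝ := gAux c.dropLast.reverse q 1
  set β : ℝ := ((u.sum + a : ℕ) : ℝ) with hβ
  set γ : ℝ := ((b + v.sum : ℕ) : ℝ) with hγ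
  rw [hB, hA, hPsum, hsum] at *
  have hne : β + γ ≠ 0 := by
    have h1 : (0 : ℝ) < β := by
      rw [hβ]; exact_mod_cast Nat.add_pos_right u.sum ha
    have h2 : (0 : ℝ) ≤ γ := by rw [hγ]; positivity
    linarith
  field_simp [hne]
  ring
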